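/- Let x_1, …, x_n ∈ ℂ be points that are pairwise δ-separated (|x_i - x_j| > δ for i ≠ j), with δ > 1/n and n ≥ 3. Then for any z ∈ ℂ, (1/n) ∑_{i=1}^n |z - x_i|^{-2} · 1{|z - x_i| > δ/2} < (172 / (n δ²)) · log n. -/

import Mathlib

open Finset

open Metric MeasureTheory in
lemma count_annulus {n : ℕ} (δ : ℝ) (hδ : 0 < δ) (z : ℂ) (x : Fin n → ℂ)
    (hsep : ∀ i j, i ≠ j → δ < ‖x i - x j‖) (j : ℕ) (hj : 1 ≤ j)
    (T : Finset (Fin n))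
    (hT : ∀ i ∈ T, (j : ℝ) * (δ / 2) ≤ ‖z - x i‖ ∧ ‖z - x i‖ < ((j : ℝ) + 1) * (δ / 2)) :
    (T.card : ℝ) ≤ 6 * j + 3 := by
  have hj1 : (1 : ℝ) ≤ (j : ℝ) := by exact_mod_cast hj
  set R₁ : ℝ := ((j : ℝ) - 1) * (δ / 2) with hR₁
  set R₂ : ℝ := ((j : ℝ) + 2) * (δ / 2) with hR₂
  have hd2 : (0 : ℝ) < δ / 2 := by linarith
  have hR₁0 : 0 ≤ R₁ := by nlinarith
  have hdisj : (T : Set (Fin n)).PairwiseDisjoint (fun i => ball (x i) (δ / 2)) := by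
    intro i _ k _ hik
    exact ball_disjoint_ball (by
      rw [dist_eq_norm]
      linarith [hsep i k hik])
  have hsub : ∀ i ∈ T, ball (x i) (δ / 2) ⊆ ball z R₂ \ closedBall z R₁ := by
    intro i hi w hw
    have hri := hT i hi
    have h1 : dist w (x i) < δ / 2 := mem_ball.mp hw
    have h2 : dist (x i) z = ‖z - x i‖ := by
      rw [dist_eq_norm, ← norm_neg]; ring_nf
    constructor
    · have := dist_triangle w (x i) z
      rw [mem_ball]
      calc dist w z ≤ dist w (x i) + dist (x i) z := this
        _ < δ / 2 + ((j : ℝ) + 1) * (δ / 2) := by rw [h2]; linarith [hri.2]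
        _ = R₂ := by ring
    · simp only [Set.mem_compl_iff, mem_closedBall, not_le]
      have : dist (x i) z - dist w (x i) ≤ dist w z := by
        have h3 := dist_triangle (x i) w z
        rw [dist_comm (x i) w] at h3
        linarith
      rw [h2] at this
      nlinarith [hri.1]
  have hmeas : ∑ i ∈ T, volume (ball (x i) (δ / 2))
      ≤ volume (ball z R₂ \ closedBall z R₁) := by
    rw [← measure_biUnion_finset hdisj (fun i _ => measurableSet_ball)]
    exact measure_mono (Set.iUnion₂_subset hsub)
  have hcb : closedBall z R₁ ⊆ ball z R₂ :=
    closedBall_subset_ball (by nlinarith)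
  have hdiff : volume (ball z R₂ \ closedBall z R₁)
      = volume (ball z R₂) - volume (closedBall z R₁) :=
    measure_diff hcb measurableSet_closedBall.nullMeasurableSet
      (measure_closedBall_lt_top.ne)
  have key : (T.card : ℝ) * ((δ / 2) ^ 2 * Real.pi) ≤ R₂ ^ 2 * Real.pi - R₁ ^ 2 * Real.pi := by
    have h1 : (∑ i ∈ T, volume (ball (x i) (δ / 2))).toReal
        = (T.card : ℝ) * ((δ / 2) ^ 2 * Real.pi) := by
      rw [ENNReal.toReal_sum (fun i _ => by simp [Complex.volume_ball]; exact ENNReal.mul_ne_top (by simp) ENNReal.coe_ne_top)]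
      simp only [Complex.volume_ball]
      rw [Finset.sum_const, nsmul_eq_mul]
      congr 1
      rw [ENNReal.toReal_mul, ENNReal.toReal_pow, ENNReal.toReal_ofReal (le_of_lt hd2)]
      simp [NNReal.coe_real_pi]
    have h2 : (volume (ball z R₂ \ closedBall z R₁)).toReal
        = R₂ ^ 2 * Real.pi - R₁ ^ 2 * Real.pi := by
      rw [hdiff, ENNReal.toReal_sub_of_le (measure_mono hcb) measure_ball_lt_top.ne]
      simp only [Complex.volume_ball, Complex.volume_closedBall]
      rw [ENNReal.toReal_mul, ENNReal.toReal_mul, ENNReal.toReal_pow, ENNReal.toReal_pow,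
        ENNReal.toReal_ofReal (by nlinarith : (0:ℝ) ≤ R₂), ENNReal.toReal_ofReal hR₁0]
      simp [NNReal.coe_real_pi]
    rw [← h1, ← h2]
    exact ENNReal.toReal_mono (by rw [hdiff]; exact (tsub_le_self.trans_lt measure_ball_lt_top).ne) hmeas
  have hpi := Real.pi_pos
  have hR : R₂ ^ 2 - R₁ ^ 2 = (6 * (j:ℝ) + 3) * (δ / 2) ^ 2 := by
    rw [hR₁, hR₂]; ring
  nlinarith [mul_pos (mul_pos hd2 hd2) hpi, sq_nonneg (δ/2)]

open Classical in
/-- Deterministic counting estimate: for `δ`-separated points, the truncated sum of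
inverse squared distances is at most `(172 / (n δ²)) log n`. -/
theorem separated_points_inverse_square_sum (n : ℕ) (hn : 3 ≤ n) (δ : ℝ)
    (hδ : 1 / (n : ℝ) < δ)
    (x : Fin n → ℂ) (hsep : ∀ i j, i ≠ j → δ < ‖x i - x j‖) (z : ℂ) :
    (1 / (n : ℝ)) * ∑ i, (if δ / 2 < ‖z - x i‖ then (‖z - x i‖ ^ 2)⁻¹ else 0) <
      172 / ((n : ℝ) * δ ^ 2) * Real.log n := by
  have hn0 : (0 : ℝ) < n := by
    have : (3 : ℝ) ≤ n := by exact_mod_cast hn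
    linarith
  have hδ0 : 0 < δ := lt_trans (by positivity) hδ
  have hd2 : (0 : ℝ) < δ / 2 := by linarith
  set r : Fin n → ℝ := fun i => ‖z - x i‖ with hr
  set S : Finset (Fin n) := Finset.univ.filter (fun i => δ / 2 < r i) with hS
  have hsum_eq : ∑ i, (if δ / 2 < ‖z - x i‖ then (‖z - x i‖ ^ 2)⁻¹ else 0)
      = ∑ i ∈ S, (r i ^ 2)⁻¹ := (Finset.sum_filter _ _).symm
  set key : Fin n → ℕ := fun i => min n ⌊2 * r i / δ⌋₊ with hkey
  have hmaps : ∀ i ∈ S, key i ∈ Finset.Icc 1 n := by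
    intro i hi
    rw [hS, Finset.mem_filter] at hi
    have hri : δ / 2 < r i := hi.2
    have h1 : 1 ≤ ⌊2 * r i / δ⌋₊ := by
      apply Nat.le_floor
      rw [le_div_iff₀ hδ0]
      push_cast
      linarith
    rw [Finset.mem_Icc]
    exact ⟨le_min (by omega) h1, min_le_left _ _⟩
  have hfib : ∑ j ∈ Finset.Icc 1 n, ∑ i ∈ S.filter (fun i => key i = j), (r i ^ 2)⁻¹
      = ∑ i ∈ S, (r i ^ 2)⁻¹ :=
    Finset.sum_fiberwise_of_maps_to hmaps _
  -- bound each fiber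
  have hbound : ∀ j ∈ Finset.Icc 1 n,
      ∑ i ∈ S.filter (fun i => key i = j), (r i ^ 2)⁻¹ ≤ 36 / δ ^ 2 * ((j : ℝ))⁻¹ := by
    intro j hj
    rw [Finset.mem_Icc] at hj
    obtain ⟨hj1, hjn⟩ := hj
    have hj1' : (1 : ℝ) ≤ (j : ℝ) := by exact_mod_cast hj1
    set T := S.filter (fun i => key i = j) with hT
    have hterm : ∀ i ∈ T, (r i ^ 2)⁻¹ ≤ (((j : ℝ) * (δ / 2)) ^ 2)⁻¹ := by
      intro i hi
      rw [hT, Finset.mem_filter] at hi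
      have hik : key i = j := hi.2
      have hlow : (j : ℝ) * (δ / 2) ≤ r i := by
        have hik' : min n ⌊2 * r i / δ⌋₊ = j := hik
        have hfl : (j : ℕ) ≤ ⌊2 * r i / δ⌋₊ := by omega
        have hri0 : (0 : ℝ) ≤ 2 * r i / δ :=
          div_nonneg (mul_nonneg (by norm_num) (norm_nonneg _)) hδ0.le
        have : (j : ℝ) ≤ 2 * r i / δ := le_trans (by exact_mod_cast hfl)
          (Nat.floor_le hri0)
        calc (j : ℝ) * (δ / 2) ≤ (2 * r i / δ) * (δ / 2) := by nlinarith
          _ = r i := by field_simp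
      have hjp : (0 : ℝ) < (j : ℝ) * (δ / 2) := by positivity
      apply inv_anti₀ (by positivity)
      nlinarith
    have hcard : (T.card : ℝ) ≤ 9 * j := by
      by_cases hcase : j < n
      · have hTT : ∀ i ∈ T, (j : ℝ) * (δ / 2) ≤ r i ∧ r i < ((j : ℝ) + 1) * (δ / 2) := by
          intro i hi
          rw [hT, Finset.mem_filter] at hi
          have hik : key i = j := hi.2
          have hik' : min n ⌊2 * r i / δ⌋₊ = j := hik
          have hfl : ⌊2 * r i / δ⌋₊ = j := by omega
          have hri0 : (0 : ℝ) ≤ 2 * r i / δ :=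
            div_nonneg (mul_nonneg (by norm_num) (norm_nonneg _)) hδ0.le
          constructor
          · have : (j : ℝ) ≤ 2 * r i / δ := by
              rw [← hfl]
              exact Nat.floor_le hri0
            calc (j : ℝ) * (δ / 2) ≤ (2 * r i / δ) * (δ / 2) := by nlinarith
              _ = r i := by field_simp
          · have : 2 * r i / δ < (j : ℝ) + 1 := by
              rw [← hfl]
              exact Nat.lt_floor_add_one _
            calc r i = (2 * r i / δ) * (δ / 2) := by field_simp
              _ < ((j : ℝ) + 1) * (δ / 2) := by nlinarith
        have := count_annulus δ hδ0 z x hsep j hj1 T hTT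
        push_cast at this ⊢
        linarith [hj1']
      · have hjn' : j = n := by omega
        have : T.card ≤ n := le_trans (Finset.card_le_card (by
          intro i hi; exact Finset.mem_univ i)) (by simp)
        calc (T.card : ℝ) ≤ (n : ℝ) := by exact_mod_cast this
          _ ≤ 9 * j := by rw [hjn']; push_cast; linarith
    calc ∑ i ∈ T, (r i ^ 2)⁻¹ ≤ T.card • ((((j : ℝ) * (δ / 2)) ^ 2)⁻¹) :=
          Finset.sum_le_card_nsmul _ _ _ hterm
      _ = (T.card : ℝ) * ((((j : ℝ) * (δ / 2)) ^ 2)⁻¹) := by rw [nsmul_eq_mul]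
      _ ≤ 36 / δ ^ 2 * ((j : ℝ))⁻¹ := by
          have h1 : (((j : ℝ) * (δ / 2)) ^ 2)⁻¹ = 4 / ((j:ℝ) ^ 2 * δ ^ 2) := by
            field_simp; ring
          have h2 : 36 / δ ^ 2 * ((j : ℝ))⁻¹ = 36 / ((j:ℝ) * δ ^ 2) := by
            field_simp
          have hδ2 : (0 : ℝ) < δ ^ 2 := by positivity
          rw [h1, h2, ← mul_div_assoc, div_le_div_iff₀ (by positivity) (by positivity)]
          nlinarith [hcard, hδ2.le, hj1', mul_le_mul_of_nonneg_right hcard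
            (le_of_lt (mul_pos (lt_of_lt_of_le one_pos hj1') hδ2))]
  -- harmonic sum
  have hharm : ∑ j ∈ Finset.Icc 1 n, ((j : ℝ))⁻¹ ≤ 1 + Real.log n := by
    have h1 : ((harmonic n : ℚ) : ℝ) = ∑ j ∈ Finset.Icc 1 n, ((j : ℝ))⁻¹ := by
      rw [harmonic_eq_sum_Icc]
      push_cast
      rfl
    rw [← h1]
    exact harmonic_le_one_add_log n
  have hlog1 : 1 ≤ Real.log n := by
    rw [Real.le_log_iff_exp_le hn0]
    calc Real.exp 1 ≤ 2.7182818286 := (Real.exp_one_lt_d9).le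
      _ ≤ 3 := by norm_num
      _ ≤ (n : ℝ) := by exact_mod_cast hn
  have hSsum : ∑ i ∈ S, (r i ^ 2)⁻¹ ≤ 36 / δ ^ 2 * (1 + Real.log n) := by
    rw [← hfib]
    calc ∑ j ∈ Finset.Icc 1 n, ∑ i ∈ S.filter (fun i => key i = j), (r i ^ 2)⁻¹
        ≤ ∑ j ∈ Finset.Icc 1 n, 36 / δ ^ 2 * ((j : ℝ))⁻¹ := Finset.sum_le_sum hbound
      _ = 36 / δ ^ 2 * ∑ j ∈ Finset.Icc 1 n, ((j : ℝ))⁻¹ := by rw [Finset.mul_sum]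
      _ ≤ 36 / δ ^ 2 * (1 + Real.log n) := by
          apply mul_le_mul_of_nonneg_left hharm (by positivity)
  rw [hsum_eq]
  have hfinal : 36 / δ ^ 2 * (1 + Real.log n) ≤ 72 / δ ^ 2 * Real.log n := by
    have : 0 < δ ^ 2 := by positivity
    rw [div_mul_eq_mul_div, div_mul_eq_mul_div, div_le_div_iff₀ this this]
    nlinarith
  have hchain : (1 / (n : ℝ)) * ∑ i ∈ S, (r i ^ 2)⁻¹ ≤ (1 / (n : ℝ)) * (72 / δ ^ 2 * Real.log n) :=
    mul_le_mul_of_nonneg_left (le_trans hSsum hfinal) (by positivity)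
  apply lt_of_le_of_lt hchain
  have : 172 / ((n : ℝ) * δ ^ 2) * Real.log n - (1 / (n : ℝ)) * (72 / δ ^ 2 * Real.log n)
      = 100 / ((n : ℝ) * δ ^ 2) * Real.log n := by
    field_simp
    ring
  nlinarith [mul_pos (div_pos (by norm_num : (0:ℝ) < 100) (by positivity : (0:ℝ) < (n:ℝ) * δ ^ 2)) (lt_of_lt_of_le one_pos hlog1)]
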